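/- Let 0 < q < 1, let t > 0 be a real number, and let k, r, ν be natural numbers with 1 ≤ k < r ≤ ν. Define F(y, z) = Σ_{j=r}^{ν} Σ_{s=k}^{j} q^{-s(ν-s) - (j-s)(ν-j)} · ([ν]_q!/([s]_q![j−s]_q![ν−j]_q!)) · (y/t)^s (z/t)^{j-s} · ∏_{i=1}^{j-s} (1 − y/(q^{i-1} z)) · ∏_{m=1}^{ν-j} (1 − z/(q^{m-1} t)). Then for all real y ≠ 0 and z ≠ 0, applying the q-derivative first in y and then in z to F yields q^{-r(ν-r) - k(r-k)} · ([ν]_q!/([k−1]_q![r−k−1]_q![ν−r]_q!)) · (y^{k-1}/t^r) · z^{r-k-1} · ∏_{i=1}^{r-k-1} (1 − y/(q^{i} z)) · ∏_{m=1}^{ν-r} (1 − z/(q^{m-1} t)). -/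

import Mathlib

/-- The `q`-number `[m]_q = (1 - q^m)/(1 - q)`. -/
noncomputable def qnum (q : ℝ) (m : ℕ) : ℝ := (1 - q ^ m) / (1 - q)

/-- The `q`-factorial `[n]_q! = [1]_q [2]_q ⋯ [n]_q`. -/
noncomputable def qfact (q : ℝ) (n : ℕ) : ℝ := ∏ i ∈ Finset.range n, qnum q (i + 1)

lemma qnum_pos {q : ℝ} (hq0 : 0 < q) (hq1 : q < 1) (m : ℕ) (hm : 1 ≤ m) : 0 < qnum q m := by
  have h1 : q ^ m < 1 := pow_lt_one₀ hq0.le hq1 (by omega)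
  exact div_pos (by linarith) (by linarith)

lemma qfact_pos {q : ℝ} (hq0 : 0 < q) (hq1 : q < 1) (n : ℕ) : 0 < qfact q n := by
  refine Finset.prod_pos fun i _ => qnum_pos hq0 hq1 _ (by omega)

lemma qfact_ne {q : ℝ} (hq0 : 0 < q) (hq1 : q < 1) (n : ℕ) : qfact q n ≠ 0 :=
  (qfact_pos hq0 hq1 n).ne'

lemma qfact_succ (q : ℝ) (n : ℕ) : qfact q (n + 1) = qfact q n * qnum q (n + 1) :=
  Finset.prod_range_succ _ _

lemma tele (f : ℕ → ℝ) {k j : ℕ} (h : k ≤ j) :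
    ∑ s ∈ Finset.Icc k j, (f s - f (s + 1)) = f k - f (j + 1) := by
  induction j, h using Nat.le_induction with
  | base => simp
  | succ n hn ih =>
      rw [show Finset.Icc k (n+1) = insert (n+1) (Finset.Icc k n) by
            ext x; simp [Finset.mem_Icc]; omega
          ,Finset.sum_insert (by simp), ih]
      ring

noncomputable def gp (q y w : ℝ) (n : ℕ) : ℝ := ∏ i ∈ Finset.range n, (1 - y / (q ^ i * w))
noncomputable def gph (q y w : ℝ) (n : ℕ) : ℝ := ∏ i ∈ Finset.range n, (1 - y / (q ^ (i+1) * w))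
noncomputable def hp (q t w : ℝ) (p : ℕ) : ℝ := ∏ m ∈ Finset.range p, (1 - w / (q ^ m * t))

lemma gp_succ (q y w : ℝ) (n : ℕ) : gp q y w (n+1) = gp q y w n * (1 - y / (q ^ n * w)) :=
  Finset.prod_range_succ _ _

lemma gph_succ (q y w : ℝ) (n : ℕ) : gph q y w (n+1) = gph q y w n * (1 - y / (q ^ (n+1) * w)) :=
  Finset.prod_range_succ _ _

lemma hp_succ (q t w : ℝ) (p : ℕ) : hp q t w (p+1) = hp q t w p * (1 - w / (q ^ p * t)) :=
  Finset.prod_range_succ _ _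

lemma qdiv {q : ℝ} (hq : q ≠ 0) (a b : ℝ) (i : ℕ) :
    q * a / (q ^ (i+1) * b) = a / (q ^ i * b) := by
  rw [pow_succ, mul_comm (q ^ i) q, mul_assoc, mul_div_mul_left _ _ hq]

lemma gp_qy {q : ℝ} (hq : q ≠ 0) (y w : ℝ) (m : ℕ) :
    gp q (q * y) w (m+1) = (1 - q * y / w) * gp q y w m := by
  rw [gp, Finset.prod_range_succ', mul_comm]
  congr 1
  · simp
  · refine Finset.prod_congr rfl fun i _ => ?_
    rw [qdiv hq]

lemma gp_qw {q : ℝ} (hq : q ≠ 0) (y w : ℝ) (n : ℕ) :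
    gp q y (q * w) n = gph q y w n := by
  refine Finset.prod_congr rfl fun i _ => ?_
  congr 1
  rw [pow_succ]; ring

lemma gp_split {q : ℝ} (y w : ℝ) (m : ℕ) :
    gp q y w (m+1) = (1 - y / w) * gph q y w m := by
  rw [gp, Finset.prod_range_succ', mul_comm]
  congr 1
  simp

lemma hp_qw {q : ℝ} (hq : q ≠ 0) (t w : ℝ) (p : ℕ) :
    hp q t (q * w) (p+1) = (1 - q * w / t) * hp q t w p := by
  rw [hp, Finset.prod_range_succ', mul_comm]
  congr 1
  · simp
  · refine Finset.prod_congr rfl fun m _ => ?_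
    rw [qdiv hq]
noncomputable def TT (q t y w : ℝ) (ν j s : ℕ) : ℝ :=
  q ^ (-((s : ℤ) * ((ν : ℤ) - (s : ℤ))) - ((j : ℤ) - (s : ℤ)) * ((ν : ℤ) - (j : ℤ)))
    * (qfact q ν / (qfact q s * qfact q (j - s) * qfact q (ν - j)))
    * (y / t) ^ s * (w / t) ^ (j - s)
    * gp q y w (j - s)
    * hp q t w (ν - j)

noncomputable def PP (q t y w : ℝ) (ν j s : ℕ) : ℝ :=
  if s ≤ j then
    q ^ (-((s : ℤ) * ((ν : ℤ) - (s : ℤ))) - ((j : ℤ) - (s : ℤ)) * ((ν : ℤ) - (j : ℤ)))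
      * (qfact q ν / (qfact q s * qfact q (j - s) * qfact q (ν - j)))
      * qnum q s * (y ^ (s - 1) / t ^ s) * (w / t) ^ (j - s)
      * gp q y w (j - s)
      * hp q t w (ν - j)
  else 0

set_option maxHeartbeats 2000000 in
lemma stage1_term {q : ℝ} (hq0 : 0 < q) (hq1 : q < 1) {t y w : ℝ} (ht : t ≠ 0) (hy : y ≠ 0)
    (hw : w ≠ 0) (ν j s : ℕ) (hs1 : 1 ≤ s) (hsj : s ≤ j) (hjν : j ≤ ν) :
    TT q t y w ν j s - TT q t (q * y) w ν j s
      = (1 - q) * y * (PP q t y w ν j s - PP q t y w ν j (s + 1)) := by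
  have hq : q ≠ 0 := hq0.ne'
  have h1q : (1 : ℝ) - q ≠ 0 := by intro h; linarith [sub_eq_zero.mp h]
  obtain ⟨a, rfl⟩ : ∃ a, s = a + 1 := ⟨s - 1, by omega⟩
  rcases eq_or_lt_of_le hsj with rfl | h
  · -- s = j
    simp only [TT, PP, Nat.sub_self, if_pos (le_refl _),
      if_neg (by omega : ¬ a + 1 + 1 ≤ a + 1)]
    simp only [gp, Finset.prod_range_zero, Nat.add_sub_cancel, pow_zero, qnum]
    have key : ∀ K C H : ℝ,
        K * C * (y / t) ^ (a + 1) * 1 * 1 * H - K * C * (q * y / t) ^ (a + 1) * 1 * 1 * H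
          = (1 - q) * y *
              (K * C * ((1 - q ^ (a + 1)) / (1 - q)) * (y ^ a / t ^ (a + 1)) * 1 * 1 * H - 0) := by
      intro K C H
      simp only [div_pow]
      field_simp
      ring
    exact key _ _ _
  · -- s < j
    obtain ⟨m, rfl⟩ : ∃ m, j = (a + 1) + (m + 1) := ⟨j - a - 2, by omega⟩
    simp only [TT, PP, if_pos (by omega : a + 1 ≤ a + 1 + (m + 1)),
      if_pos (by omega : a + 1 + 1 ≤ a + 1 + (m + 1)),
      (by omega : a + 1 + (m + 1) - (a + 1) = m + 1),
      (by omega : a + 1 + (m + 1) - (a + 1 + 1) = m), Nat.add_sub_cancel]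
    rw [gp_succ, gp_qy hq]
    have hE2 : q ^ (-((↑(a + 1 + 1) : ℤ) * ((↑ν : ℤ) - ↑(a + 1 + 1))) -
          ((↑(a + 1 + (m + 1)) : ℤ) - ↑(a + 1 + 1)) * ((↑ν : ℤ) - ↑(a + 1 + (m + 1))))
        = q ^ (-((↑(a + 1) : ℤ) * ((↑ν : ℤ) - ↑(a + 1))) -
            ((↑(a + 1 + (m + 1)) : ℤ) - ↑(a + 1)) * ((↑ν : ℤ) - ↑(a + 1 + (m + 1))))
          * q ^ (a + 1) / q ^ m := by
      rw [show (-((↑(a + 1 + 1) : ℤ) * ((↑ν : ℤ) - ↑(a + 1 + 1))) -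
            ((↑(a + 1 + (m + 1)) : ℤ) - ↑(a + 1 + 1)) * ((↑ν : ℤ) - ↑(a + 1 + (m + 1))))
          = (-((↑(a + 1) : ℤ) * ((↑ν : ℤ) - ↑(a + 1))) -
            ((↑(a + 1 + (m + 1)) : ℤ) - ↑(a + 1)) * ((↑ν : ℤ) - ↑(a + 1 + (m + 1))))
            + ((a + 1 : ℕ) : ℤ) - ((m : ℕ) : ℤ) by push_cast; ring]
      rw [zpow_sub₀ hq, zpow_add₀ hq, zpow_natCast, zpow_natCast]
    rw [hE2, qfact_succ q (a + 1), qfact_succ q m]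
    simp only [qnum]
    have key : ∀ K N S M V G H : ℝ, S ≠ 0 → M ≠ 0 → V ≠ 0 → N = N →
        K * (N / (S * (M * ((1 - q ^ (m + 1)) / (1 - q))) * V)) * (y / t) ^ (a + 1) *
              (w / t) ^ (m + 1) * (G * (1 - y / (q ^ m * w))) * H -
            K * (N / (S * (M * ((1 - q ^ (m + 1)) / (1 - q))) * V)) * (q * y / t) ^ (a + 1) *
              (w / t) ^ (m + 1) * ((1 - q * y / w) * G) * H
          = (1 - q) * y *
              (K * (N / (S * (M * ((1 - q ^ (m + 1)) / (1 - q))) * V)) *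
                    ((1 - q ^ (a + 1)) / (1 - q)) * (y ^ a / t ^ (a + 1)) * (w / t) ^ (m + 1) *
                  (G * (1 - y / (q ^ m * w))) * H -
                K * q ^ (a + 1) / q ^ m *
                    (N / (S * ((1 - q ^ (a + 1 + 1)) / (1 - q)) * M * V)) *
                    ((1 - q ^ (a + 1 + 1)) / (1 - q)) * (y ^ (a + 1) / t ^ (a + 1 + 1)) *
                  (w / t) ^ m * G * H) := by
      intro K N S M V G H hS hM hV _
      have hm1 : (1 : ℝ) - q ^ (m + 1) ≠ 0 := by
        have : q ^ (m + 1) < 1 := pow_lt_one₀ hq0.le hq1 (by omega)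
        intro hc; linarith [sub_eq_zero.mp hc]
      have ha2 : (1 : ℝ) - q ^ (a + 1 + 1) ≠ 0 := by
        have : q ^ (a + 1 + 1) < 1 := pow_lt_one₀ hq0.le hq1 (by omega)
        intro hc; linarith [sub_eq_zero.mp hc]
      have hqm : q ^ m ≠ 0 := pow_ne_zero _ hq
      simp only [div_pow]
      field_simp
      ring
    exact key _ _ _ _ _ _ _ (qfact_ne hq0 hq1 _) (qfact_ne hq0 hq1 _) (qfact_ne hq0 hq1 _) rfl

noncomputable def AA (q t y : ℝ) (k ν : ℕ) (j : ℕ) (w : ℝ) : ℝ :=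
  q ^ (-((k : ℤ) * ((ν : ℤ) - (k : ℤ))) - ((j : ℤ) - (k : ℤ)) * ((ν : ℤ) - (j : ℤ)))
    * (qfact q ν / (qfact q (k - 1) * qfact q (j - k) * qfact q (ν - j)))
    * (y ^ (k - 1) / t ^ k) * (w / t) ^ (j - k)
    * gp q y w (j - k)
    * hp q t w (ν - j)

set_option maxHeartbeats 2000000 in
lemma PP_k {q : ℝ} (hq0 : 0 < q) (hq1 : q < 1) (t y w : ℝ) (ν j k : ℕ)
    (hk : 1 ≤ k) (hkj : k ≤ j) :
    PP q t y w ν j k = AA q t y k ν j w := by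
  obtain ⟨b, rfl⟩ : ∃ b, k = b + 1 := ⟨k - 1, by omega⟩
  rw [PP, if_pos hkj, AA, qfact_succ q b]
  simp only [Nat.add_sub_cancel]
  have h1 : qnum q (b + 1) ≠ 0 := (qnum_pos hq0 hq1 _ (by omega)).ne'
  have cance : ∀ N S A B x : ℝ, x ≠ 0 → N / (S * x * A * B) * x = N / (S * A * B) := by
    intro N S A B x hx
    rw [div_mul_eq_mul_div, show S * x * A * B = S * A * B * x by ring,
      mul_div_mul_right _ _ hx]
  have hr := cance (qfact q ν) (qfact q b) (qfact q (j - (b + 1))) (qfact q (ν - j))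
    (qnum q (b + 1)) h1
  linear_combination (q ^ (-((↑(b + 1) : ℤ) * ((↑ν : ℤ) - ↑(b + 1))) -
      ((↑j : ℤ) - ↑(b + 1)) * ((↑ν : ℤ) - ↑j)) * (y ^ b / t ^ (b + 1)) *
      (w / t) ^ (j - (b + 1)) * gp q y w (j - (b + 1)) * hp q t w (ν - j)) * hr

lemma stage1_sum {q : ℝ} (hq0 : 0 < q) (hq1 : q < 1) {t y w : ℝ} (ht : t ≠ 0) (hy : y ≠ 0)
    (hw : w ≠ 0) (k r ν : ℕ) (hk : 1 ≤ k) (hkr : k < r) (hrν : r ≤ ν) :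
    (∑ j ∈ Finset.Icc r ν, ∑ s ∈ Finset.Icc k j, TT q t y w ν j s)
      - (∑ j ∈ Finset.Icc r ν, ∑ s ∈ Finset.Icc k j, TT q t (q * y) w ν j s)
      = (1 - q) * y * ∑ j ∈ Finset.Icc r ν, AA q t y k ν j w := by
  rw [← Finset.sum_sub_distrib, Finset.mul_sum]
  refine Finset.sum_congr rfl fun j hj => ?_
  rw [Finset.mem_Icc] at hj
  rw [← Finset.sum_sub_distrib]
  have hkj : k ≤ j := le_trans hkr.le hj.1
  calc ∑ s ∈ Finset.Icc k j, (TT q t y w ν j s - TT q t (q * y) w ν j s)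
      = ∑ s ∈ Finset.Icc k j,
          ((1 - q) * y * (PP q t y w ν j s - PP q t y w ν j (s + 1))) := by
        refine Finset.sum_congr rfl fun s hs => ?_
        rw [Finset.mem_Icc] at hs
        exact stage1_term hq0 hq1 ht hy hw ν j s (by omega) hs.2 hj.2
    _ = (1 - q) * y * ∑ s ∈ Finset.Icc k j, (PP q t y w ν j s - PP q t y w ν j (s + 1)) := by
        rw [Finset.mul_sum]
    _ = (1 - q) * y * (PP q t y w ν j k - PP q t y w ν j (j + 1)) := by rw [tele _ hkj]
    _ = (1 - q) * y * AA q t y k ν j w := by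
        rw [PP_k hq0 hq1 t y w ν j k hk hkj, PP, if_neg (by omega : ¬ j + 1 ≤ j)]
        ring

noncomputable def RR (q t y z : ℝ) (k ν j : ℕ) : ℝ :=
  if j ≤ ν then
    q ^ (-((k : ℤ) * ((ν : ℤ) - (k : ℤ))) - ((j : ℤ) - (k : ℤ)) * ((ν : ℤ) - (j : ℤ)))
      * (qfact q ν / (qfact q (k - 1) * qfact q (j - k - 1) * qfact q (ν - j)))
      * (y ^ (k - 1) / t ^ k) * ((z / t) ^ (j - k - 1) / t)
      * gph q y z (j - k - 1)
      * hp q t z (ν - j)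
  else 0

set_option maxHeartbeats 2000000 in
lemma stage2_term {q : ℝ} (hq0 : 0 < q) (hq1 : q < 1) {t y z : ℝ} (ht : t ≠ 0) (hy : y ≠ 0)
    (hz : z ≠ 0) (k ν j : ℕ) (hk : 1 ≤ k) (hkj : k < j) (hjν : j ≤ ν) :
    AA q t y k ν j z - AA q t y k ν j (q * z)
      = (1 - q) * z * (RR q t y z k ν j - RR q t y z k ν (j + 1)) := by
  have hq : q ≠ 0 := hq0.ne'
  have h1q : (1 : ℝ) - q ≠ 0 := by intro h; linarith [sub_eq_zero.mp h]
  obtain ⟨n, rfl⟩ : ∃ n, j = k + (n + 1) := ⟨j - k - 1, by omega⟩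
  rcases eq_or_lt_of_le hjν with rfl | h
  · -- j = ν
    simp only [AA, RR, Nat.sub_self, if_pos (le_refl _),
      if_neg (by omega : ¬ k + (n + 1) + 1 ≤ k + (n + 1)),
      (by omega : k + (n + 1) - k = n + 1), (by omega : k + (n + 1) - k - 1 = n),
      Nat.add_sub_cancel]
    simp only [hp, Finset.prod_range_zero]
    rw [gp_split, gp_qw hq, gph_succ, qfact_succ q n]
    simp only [qnum]
    have hn1 : (1 : ℝ) - q ^ (n + 1) ≠ 0 := by
      have : q ^ (n + 1) < 1 := pow_lt_one₀ hq0.le hq1 (by omega)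
      intro hc; linarith [sub_eq_zero.mp hc]
    have hqn : q ^ (n + 1) ≠ 0 := pow_ne_zero _ hq
    have key : ∀ K N B M V Y G : ℝ, B ≠ 0 → M ≠ 0 → V ≠ 0 →
        K * (N / (B * (M * ((1 - q ^ (n + 1)) / (1 - q))) * V)) * Y * (z / t) ^ (n + 1) *
              ((1 - y / z) * G) * 1 -
            K * (N / (B * (M * ((1 - q ^ (n + 1)) / (1 - q))) * V)) * Y * (q * z / t) ^ (n + 1) *
              (G * (1 - y / (q ^ (n + 1) * z))) * 1
          = (1 - q) * z *
              (K * (N / (B * M * V)) * Y * ((z / t) ^ n / t) * G * 1 - 0) := by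
      intro K N B M V Y G hB hM hV
      simp only [div_pow]
      field_simp
      ring
    exact key _ _ _ _ _ _ _ (qfact_ne hq0 hq1 _) (qfact_ne hq0 hq1 _) (qfact_ne hq0 hq1 _)
  · -- j < ν
    obtain ⟨p, rfl⟩ : ∃ p, ν = (k + (n + 1)) + (p + 1) := ⟨ν - k - n - 2, by omega⟩
    simp only [AA, RR, if_pos (by omega : k + (n + 1) ≤ k + (n + 1) + (p + 1)),
      if_pos (by omega : k + (n + 1) + 1 ≤ k + (n + 1) + (p + 1)),
      (by omega : k + (n + 1) - k = n + 1), (by omega : k + (n + 1) - k - 1 = n),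
      (by omega : k + (n + 1) + 1 - k = n + 2), (by omega : k + (n + 1) + 1 - k - 1 = n + 1),
      (by omega : k + (n + 1) + (p + 1) - (k + (n + 1)) = p + 1),
      (by omega : k + (n + 1) + (p + 1) - (k + (n + 1) + 1) = p),
      Nat.add_sub_cancel, (by omega : n + 2 - 1 = n + 1)]
    rw [gp_split, gp_qw hq, gph_succ, hp_succ, hp_qw hq]
    have hE2 : q ^ (-((↑k : ℤ) * ((↑(k + (n + 1) + (p + 1)) : ℤ) - ↑k)) -
          ((↑(k + (n + 1) + 1) : ℤ) - ↑k) * ((↑(k + (n + 1) + (p + 1)) : ℤ) - ↑(k + (n + 1) + 1)))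
        = q ^ (-((↑k : ℤ) * ((↑(k + (n + 1) + (p + 1)) : ℤ) - ↑k)) -
            ((↑(k + (n + 1)) : ℤ) - ↑k) * ((↑(k + (n + 1) + (p + 1)) : ℤ) - ↑(k + (n + 1))))
            * q ^ (n + 1) / q ^ p := by
      rw [show (-((↑k : ℤ) * ((↑(k + (n + 1) + (p + 1)) : ℤ) - ↑k)) -
          ((↑(k + (n + 1) + 1) : ℤ) - ↑k) * ((↑(k + (n + 1) + (p + 1)) : ℤ) - ↑(k + (n + 1) + 1)))
          = (-((↑k : ℤ) * ((↑(k + (n + 1) + (p + 1)) : ℤ) - ↑k)) -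
            ((↑(k + (n + 1)) : ℤ) - ↑k) * ((↑(k + (n + 1) + (p + 1)) : ℤ) - ↑(k + (n + 1))))
            + ((n + 1 : ℕ) : ℤ) - ((p : ℕ) : ℤ) by push_cast; ring]
      rw [zpow_sub₀ hq, zpow_add₀ hq, zpow_natCast, zpow_natCast]
    rw [hE2, qfact_succ q n, qfact_succ q p]
    simp only [qnum]
    have hn1 : (1 : ℝ) - q ^ (n + 1) ≠ 0 := by
      have : q ^ (n + 1) < 1 := pow_lt_one₀ hq0.le hq1 (by omega)
      intro hc; linarith [sub_eq_zero.mp hc]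
    have hp1 : (1 : ℝ) - q ^ (p + 1) ≠ 0 := by
      have : q ^ (p + 1) < 1 := pow_lt_one₀ hq0.le hq1 (by omega)
      intro hc; linarith [sub_eq_zero.mp hc]
    have hqn : q ^ (n + 1) ≠ 0 := pow_ne_zero _ hq
    have hqp : q ^ p ≠ 0 := pow_ne_zero _ hq
    have key : ∀ K N B M P Y G H : ℝ, B ≠ 0 → M ≠ 0 → P ≠ 0 →
        K * (N / (B * (M * ((1 - q ^ (n + 1)) / (1 - q))) * (P * ((1 - q ^ (p + 1)) / (1 - q))))) *
              Y * (z / t) ^ (n + 1) * ((1 - y / z) * G) * (H * (1 - z / (q ^ p * t))) -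
            K * (N / (B * (M * ((1 - q ^ (n + 1)) / (1 - q))) * (P * ((1 - q ^ (p + 1)) / (1 - q))))) *
              Y * (q * z / t) ^ (n + 1) * (G * (1 - y / (q ^ (n + 1) * z))) * ((1 - q * z / t) * H)
          = (1 - q) * z *
              (K * (N / (B * M * (P * ((1 - q ^ (p + 1)) / (1 - q))))) * Y * ((z / t) ^ n / t) *
                  G * (H * (1 - z / (q ^ p * t))) -
                K * q ^ (n + 1) / q ^ p *
                    (N / (B * (M * ((1 - q ^ (n + 1)) / (1 - q))) * P)) * Y *
                    ((z / t) ^ (n + 1) / t) * (G * (1 - y / (q ^ (n + 1) * z))) * H) := by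
      intro K N B M P Y G H hB hM hP
      simp only [div_pow]
      field_simp
      ring
    exact key _ _ _ _ _ _ _ _ (qfact_ne hq0 hq1 _) (qfact_ne hq0 hq1 _) (qfact_ne hq0 hq1 _)

lemma stage2_sum {q : ℝ} (hq0 : 0 < q) (hq1 : q < 1) {t y z : ℝ} (ht : t ≠ 0) (hy : y ≠ 0)
    (hz : z ≠ 0) (k r ν : ℕ) (hk : 1 ≤ k) (hkr : k < r) (hrν : r ≤ ν) :
    (∑ j ∈ Finset.Icc r ν, AA q t y k ν j z) - (∑ j ∈ Finset.Icc r ν, AA q t y k ν j (q * z))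
      = (1 - q) * z * RR q t y z k ν r := by
  rw [← Finset.sum_sub_distrib]
  calc ∑ j ∈ Finset.Icc r ν, (AA q t y k ν j z - AA q t y k ν j (q * z))
      = ∑ j ∈ Finset.Icc r ν, ((1 - q) * z * (RR q t y z k ν j - RR q t y z k ν (j + 1))) := by
        refine Finset.sum_congr rfl fun j hj => ?_
        rw [Finset.mem_Icc] at hj
        exact stage2_term hq0 hq1 ht hy hz k ν j hk (by omega) hj.2
    _ = (1 - q) * z * (RR q t y z k ν r - RR q t y z k ν (ν + 1)) := by
        rw [← Finset.mul_sum, tele _ hrν]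
    _ = (1 - q) * z * RR q t y z k ν r := by
        have h0 : RR q t y z k ν (ν + 1) = 0 := by
          rw [RR]; exact if_neg (by omega)
        rw [h0]; ring

lemma RR_eq {q : ℝ} (hq0 : 0 < q) (hq1 : q < 1) {t y z : ℝ} (ht : t ≠ 0)
    (k r ν : ℕ) (hk : 1 ≤ k) (hkr : k < r) (hrν : r ≤ ν) :
    RR q t y z k ν r
      = q ^ (-((r : ℤ) * ((ν : ℤ) - (r : ℤ))) - (k : ℤ) * ((r : ℤ) - (k : ℤ)))
          * (qfact q ν / (qfact q (k - 1) * qfact q (r - k - 1) * qfact q (ν - r)))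
          * (y ^ (k - 1) / t ^ r) * z ^ (r - k - 1)
          * (∏ i ∈ Finset.range (r - k - 1), (1 - y / (q ^ (i + 1) * z)))
          * (∏ m ∈ Finset.range (ν - r), (1 - z / (q ^ m * t))) := by
  obtain ⟨d, rfl⟩ : ∃ d, r = k + (d + 1) := ⟨r - k - 1, by omega⟩
  rw [RR, if_pos hrν]
  simp only [(by omega : k + (d + 1) - k - 1 = d), gph, hp]
  rw [show (-((↑k : ℤ) * ((↑ν : ℤ) - ↑k)) -
        ((↑(k + (d + 1)) : ℤ) - ↑k) * ((↑ν : ℤ) - ↑(k + (d + 1))))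
      = (-((↑(k + (d + 1)) : ℤ) * ((↑ν : ℤ) - ↑(k + (d + 1)))) -
        (↑k : ℤ) * ((↑(k + (d + 1)) : ℤ) - ↑k)) by push_cast; ring]
  have key : ∀ Q C G H : ℝ,
      Q * C * (y ^ (k - 1) / t ^ k) * ((z / t) ^ d / t) * G * H
        = Q * C * (y ^ (k - 1) / t ^ (k + (d + 1))) * z ^ d * G * H := by
    intro Q C G H
    rw [pow_add]
    simp only [div_pow]
    field_simp
    ring
  exact key _ _ _ _

/-- Applying the `q`-derivative first in `y` and then in `z` to the joint `q`-distribution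
function of the `k`-th and `r`-th `q`-order statistics yields the corresponding joint
`q`-density (a `q`-Dirichlet density). -/
theorem stmt16 (q t : ℝ) (hq0 : 0 < q) (hq1 : q < 1) (ht : 0 < t) (k r ν : ℕ)
    (hk : 1 ≤ k) (hkr : k < r) (hrν : r ≤ ν)
    (F : ℝ → ℝ → ℝ)
    (hF : ∀ y z : ℝ, F y z
      = ∑ j ∈ Finset.Icc r ν, ∑ s ∈ Finset.Icc k j,
          q ^ (-((s : ℤ) * ((ν : ℤ) - (s : ℤ))) - ((j : ℤ) - (s : ℤ)) * ((ν : ℤ) - (j : ℤ)))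
            * (qfact q ν / (qfact q s * qfact q (j - s) * qfact q (ν - j)))
            * (y / t) ^ s * (z / t) ^ (j - s)
            * (∏ i ∈ Finset.range (j - s), (1 - y / (q ^ i * z)))
            * (∏ m ∈ Finset.range (ν - j), (1 - z / (q ^ m * t))))
    (G : ℝ → ℝ → ℝ)
    (hG : ∀ y z : ℝ, G y z = (F y z - F (q * y) z) / ((1 - q) * y))
    (y z : ℝ) (hy : y ≠ 0) (hz : z ≠ 0) :
    (G y z - G y (q * z)) / ((1 - q) * z)
      = q ^ (-((r : ℤ) * ((ν : ℤ) - (r : ℤ))) - (k : ℤ) * ((r : ℤ) - (k : ℤ)))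
          * (qfact q ν / (qfact q (k - 1) * qfact q (r - k - 1) * qfact q (ν - r)))
          * (y ^ (k - 1) / t ^ r) * z ^ (r - k - 1)
          * (∏ i ∈ Finset.range (r - k - 1), (1 - y / (q ^ (i + 1) * z)))
          * (∏ m ∈ Finset.range (ν - r), (1 - z / (q ^ m * t))) := by
  have hq : q ≠ 0 := hq0.ne'
  have h1q : (1 : ℝ) - q ≠ 0 := by intro h; linarith [sub_eq_zero.mp h]
  have ht' : t ≠ 0 := ht.ne'
  have key1 : ∀ w : ℝ, w ≠ 0 → G y w = ∑ j ∈ Finset.Icc r ν, AA q t y k ν j w := by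
    intro w hw
    rw [hG]
    have hF1 : F y w = ∑ j ∈ Finset.Icc r ν, ∑ s ∈ Finset.Icc k j, TT q t y w ν j s := hF y w
    have hF2 : F (q * y) w
        = ∑ j ∈ Finset.Icc r ν, ∑ s ∈ Finset.Icc k j, TT q t (q * y) w ν j s := hF (q * y) w
    rw [hF1, hF2, stage1_sum hq0 hq1 ht' hy hw k r ν hk hkr hrν,
      mul_div_cancel_left₀ _ (mul_ne_zero h1q hy)]
  rw [key1 z hz, key1 (q * z) (mul_ne_zero hq hz),
    stage2_sum hq0 hq1 ht' hy hz k r ν hk hkr hrν,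
    mul_div_cancel_left₀ _ (mul_ne_zero h1q hz),
    RR_eq hq0 hq1 ht' k r ν hk hkr hrν]
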